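/- Let V be a subspace of 𝔽_q[x₁,…,x_m] with property (*). Then for every set of points P ⊆ 𝔽_q^(m+1) and every set of polynomials L ⊆ V, letting I(P,L) = |{(v,f) ∈ P×L : f(v₁,…,v_m) = v_{m+1}}|, we have |I(P,L) − |P|·|L|/q| ≤ q^((dim V − 1)/2)·√(|P|·|L|). -/

import Mathlib

open Finset MvPolynomial
open Finset

lemma pow_inj_of_coprime {F : Type} [Field F] [Fintype F] [DecidableEq F] {k : ℕ} (hk : 0 < k)
    (h : Nat.gcd k (Fintype.card F - 1) = 1) :
    Function.Injective (fun a : F => a ^ k) := by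
  have hc : (Nat.card Fˣ).Coprime k := by
    rw [Nat.card_eq_fintype_card, Fintype.card_units]
    exact Nat.coprime_comm.mp h
  intro a b hab
  simp only at hab
  rcases eq_or_ne b 0 with rfl | hb
  · rw [zero_pow hk.ne'] at hab
    exact pow_eq_zero_iff hk.ne' |>.mp hab
  rcases eq_or_ne a 0 with rfl | ha
  · rw [zero_pow hk.ne'] at hab
    exact ((pow_eq_zero_iff hk.ne').mp hab.symm).symm
  have h2 : (Units.mk0 a ha) ^ k = (Units.mk0 b hb) ^ k := by
    ext; simp [hab]
  have := hc.pow_left_bijective.injective h2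
  simpa using congr_arg Units.val this

lemma fiber_card {F : Type} [Field F] [Fintype F] {V W : Type}
    [AddCommGroup V] [Module F V] [AddCommGroup W] [Module F W]
    [Fintype V] [FiniteDimensional F V]
    (φ : V →ₗ[F] W) (hφ : Function.Surjective φ) (c : W) :
    Nat.card {f : V // φ f = c} =
      Fintype.card F ^ (Module.finrank F V - Module.finrank F W) ∧
      Module.finrank F W ≤ Module.finrank F V := by
  classical
  obtain ⟨f₀, hf₀⟩ := hφ c
  have hr : LinearMap.range φ = ⊤ := LinearMap.range_eq_top.mpr hφ
  have hrk : Module.finrank F W + Module.finrank F (LinearMap.ker φ) = Module.finrank F V := by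
    have h := LinearMap.finrank_range_add_finrank_ker φ
    rwa [hr, finrank_top] at h
  refine ⟨?_, le_of_add_le_left (le_of_eq hrk)⟩
  have e : {f : V // φ f = c} ≃ LinearMap.ker φ :=
    { toFun := fun f => ⟨f.1 - f₀, by simp [LinearMap.mem_ker, f.2, hf₀]⟩
      invFun := fun g => ⟨g.1 + f₀, by
        have := g.2
        simp only [LinearMap.mem_ker] at this
        simp [this, hf₀]⟩
      left_inv := fun f => by ext; simp
      right_inv := fun g => by ext; simp }
  rw [Nat.card_congr e, Nat.card_eq_fintype_card, Module.card_eq_pow_finrank (K := F)]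
  congr 1
  omega


variable {m : ℕ} {F : Type} [Field F] [Fintype F] [DecidableEq F]

/-- evaluation as a linear map -/
noncomputable def evalLM (x : Fin m → F) : MvPolynomial (Fin m) F →ₗ[F] F where
  toFun f := eval x f
  map_add' := by simp
  map_smul' := by simp [smul_eq_C_mul]

omit [Fintype F] [DecidableEq F] in
@[simp] lemma evalLM_apply (x : Fin m → F) (f : MvPolynomial (Fin m) F) :
    evalLM x f = eval x f := rfl

omit [Fintype F] [DecidableEq F] in
lemma one_mem_V (V : Submodule F (MvPolynomial (Fin m) F)) (I : Finset (Fin m →₀ ℕ))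
    (hV : V = Submodule.span F ((fun d => MvPolynomial.monomial d (1 : F)) '' I))
    (h0 : (0 : Fin m →₀ ℕ) ∈ I) : (1 : MvPolynomial (Fin m) F) ∈ V := by
  rw [hV]
  apply Submodule.subset_span
  exact ⟨0, h0, by simp⟩

omit [Fintype F] [DecidableEq F] in
lemma phi_surj (V : Submodule F (MvPolynomial (Fin m) F)) (I : Finset (Fin m →₀ ℕ))
    (hV : V = Submodule.span F ((fun d => MvPolynomial.monomial d (1 : F)) '' I))
    (h0 : (0 : Fin m →₀ ℕ) ∈ I) (x : Fin m → F) :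
    Function.Surjective ((evalLM x).comp V.subtype) := by
  intro c
  exact ⟨c • ⟨1, one_mem_V V I hV h0⟩, by simp⟩

lemma psi_surj (V : Submodule F (MvPolynomial (Fin m) F)) (I : Finset (Fin m →₀ ℕ))
    (hV : V = Submodule.span F ((fun d => MvPolynomial.monomial d (1 : F)) '' I))
    (h0 : (0 : Fin m →₀ ℕ) ∈ I)
    (hpure : ∀ j : Fin m, ∃ k : ℕ, 0 < k ∧ Nat.gcd k (Fintype.card F - 1) = 1 ∧
      Finsupp.single j k ∈ I) {x y : Fin m → F} (hxy : x ≠ y) :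
    Function.Surjective (((evalLM x).comp V.subtype).prod ((evalLM y).comp V.subtype)) := by
  obtain ⟨j, hj⟩ := Function.ne_iff.mp hxy
  obtain ⟨k, hk, hgcd, hmem⟩ := hpure j
  set g : MvPolynomial (Fin m) F := monomial (Finsupp.single j k) 1 with hg
  have hgV : g ∈ V := by
    rw [hV]; exact Submodule.subset_span ⟨Finsupp.single j k, hmem, rfl⟩
  have hgx : eval x g = x j ^ k := by simp [hg, eval_monomial]
  have hgy : eval y g = y j ^ k := by simp [hg, eval_monomial]
  have hab : x j ^ k ≠ y j ^ k := fun h => hj (pow_inj_of_coprime hk hgcd h)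
  set a := x j ^ k; set b := y j ^ k
  rintro ⟨s, t⟩
  set β := (s - t) / (a - b) with hβ
  set α := s - β * a with hα
  refine ⟨α • ⟨1, one_mem_V V I hV h0⟩ + β • ⟨g, hgV⟩, ?_⟩
  have hβab : β * (a - b) = s - t := div_mul_cancel₀ _ (sub_ne_zero.mpr hab)
  simp only [LinearMap.prod_apply, Function.prod, LinearMap.comp_apply, Submodule.coe_subtype,
    AddSubmonoid.coe_add, Submodule.coe_toAddSubmonoid, SetLike.val_smul, smul_eq_mul,
    evalLM_apply, map_add, map_mul, map_one]
  rw [smul_eq_C_mul, smul_eq_C_mul]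
  simp only [map_add, map_mul, eval_C, map_one, hgx, hgy, Prod.mk_add_mk, Prod.mk.injEq]
  constructor
  · rw [hα]; ring
  · rw [hα]; linear_combination -hβab


variable {m : ℕ} {F : Type} [Field F] [Fintype F] [DecidableEq F]

lemma count_one (V : Submodule F (MvPolynomial (Fin m) F)) (I : Finset (Fin m →₀ ℕ))
    (hV : V = Submodule.span F ((fun d => MvPolynomial.monomial d (1 : F)) '' I))
    (h0 : (0 : Fin m →₀ ℕ) ∈ I) [Fintype V] [FiniteDimensional F V]
    (x : Fin m → F) (c : F) :
    Nat.card {f : V // eval x f.1 = c} = Fintype.card F ^ (Module.finrank F V - 1) ∧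
      1 ≤ Module.finrank F V := by
  have h := fiber_card ((evalLM x).comp V.subtype) (phi_surj V I hV h0 x) c
  rwa [Module.finrank_self] at h

lemma count_two (V : Submodule F (MvPolynomial (Fin m) F)) (I : Finset (Fin m →₀ ℕ))
    (hV : V = Submodule.span F ((fun d => MvPolynomial.monomial d (1 : F)) '' I))
    (h0 : (0 : Fin m →₀ ℕ) ∈ I)
    (hpure : ∀ j : Fin m, ∃ k : ℕ, 0 < k ∧ Nat.gcd k (Fintype.card F - 1) = 1 ∧
      Finsupp.single j k ∈ I) [Fintype V] [FiniteDimensional F V]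
    {x y : Fin m → F} (hxy : x ≠ y) (c d : F) :
    Nat.card {f : V // eval x f.1 = c ∧ eval y f.1 = d}
      = Fintype.card F ^ (Module.finrank F V - 2) ∧ 2 ≤ Module.finrank F V := by
  have h := fiber_card (((evalLM x).comp V.subtype).prod ((evalLM y).comp V.subtype))
    (psi_surj V I hV h0 hpure hxy) (c, d)
  rw [Module.finrank_prod, Module.finrank_self] at h
  refine ⟨?_, h.2⟩
  rw [← h.1]
  apply Nat.card_congr
  apply Equiv.subtypeEquivRight
  intro f
  simp [LinearMap.prod_apply, Prod.ext_iff, Pi.prod, eq_comm]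


set_option maxHeartbeats 1000000 in
/-- Point–polynomial incidence bound for a subspace `V` with property (*):
`|I(P,L) − |P||L|/q| ≤ q^((dim V −1)/2)·√(|P||L|)`. -/
theorem stmt15 {m : ℕ} {F : Type} [Field F] [Fintype F] [DecidableEq F]
    (V : Submodule F (MvPolynomial (Fin m) F)) (I : Finset (Fin m →₀ ℕ))
    (hV : V = Submodule.span F ((fun d => MvPolynomial.monomial d (1 : F)) '' I))
    (h0 : (0 : Fin m →₀ ℕ) ∈ I)
    (hpure : ∀ j : Fin m, ∃ k : ℕ, 0 < k ∧ Nat.gcd k (Fintype.card F - 1) = 1 ∧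
      Finsupp.single j k ∈ I)
    (P : Finset (Fin (m + 1) → F)) (L : Finset (MvPolynomial (Fin m) F))
    (hL : ∀ f ∈ L, f ∈ V) :
    |((∑ v ∈ P, (L.filter fun f =>
        MvPolynomial.eval (fun j : Fin m => v j.castSucc) f = v (Fin.last m)).card : ℕ) : ℝ) -
        (P.card : ℝ) * (L.card : ℝ) / (Fintype.card F : ℝ)| ≤
      (Fintype.card F : ℝ) ^ (((Module.finrank F V : ℝ) - 1) / 2) *
        Real.sqrt ((P.card : ℝ) * (L.card : ℝ)) := by
  classical
  haveI hfd : FiniteDimensional F V := by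
    rw [hV]; exact Module.Finite.span_of_finite F ((I.finite_toSet).image _)
  haveI : Finite V := Module.finite_of_finite F
  haveI : Fintype V := Fintype.ofFinite V
  set q : ℕ := Fintype.card F with hq
  set n : ℕ := Module.finrank F V with hn
  set Q : ℝ := (q : ℝ) with hQdef
  have hq0 : 0 < q := Fintype.card_pos
  have hQ : 0 < Q := by rw [hQdef]; exact_mod_cast hq0
  set p : ℕ := P.card
  set l : ℕ := L.card
  -- point decomposition
  set pt : (Fin (m+1) → F) → (Fin m → F) := fun v => fun j => v j.castSucc with hpt
  set lst : (Fin (m+1) → F) → F := fun v => v (Fin.last m) with hlst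
  have hpteq : ∀ v w : Fin (m+1) → F, pt v = pt w → lst v = lst w → v = w := by
    intro v w h1 h2
    funext i
    refine Fin.lastCases ?_ ?_ i
    · exact h2
    · intro i; exact congrFun h1 i
  -- counts
  have hc1 : ∀ v : Fin (m+1) → F,
      ((univ.filter fun f : V => eval (pt v) f.1 = lst v).card : ℝ) = Q ^ (n - 1) := by
    intro v
    have h := count_one V I hV h0 (pt v) (lst v)
    rw [Nat.card_eq_fintype_card, Fintype.card_subtype] at h
    rw [h.1]; push_cast; rfl
  have hn1 : 1 ≤ n := (count_one V I hV h0 (fun _ => 0) 0).2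
  have hc2 : ∀ v w : Fin (m+1) → F, v ≠ w →
      ((univ.filter fun f : V => eval (pt v) f.1 = lst v ∧ eval (pt w) f.1 = lst w).card : ℝ)
        ≤ Q ^ n / Q ^ 2 := by
    intro v w hvw
    by_cases hxy : pt v = pt w
    · have hls : lst v ≠ lst w := fun h => hvw (hpteq v w hxy h)
      have : (univ.filter fun f : V => eval (pt v) f.1 = lst v ∧ eval (pt w) f.1 = lst w) = ∅ := by
        apply Finset.filter_false_of_mem
        rintro f - ⟨h1, h2⟩
        rw [hxy] at h1
        exact hls (h1 ▸ h2)
      rw [this]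
      simp only [Finset.card_empty, Nat.cast_zero]
      positivity
    · have h := count_two V I hV h0 hpure hxy (lst v) (lst w)
      rw [Nat.card_eq_fintype_card, Fintype.card_subtype] at h
      rw [h.1]
      have h2 := h.2
      rw [le_div_iff₀ (by positivity)]
      push_cast
      rw [← pow_add]
      apply le_of_eq
      congr 1
      omega
  -- indicator and degree functions
  set χ : (Fin (m+1) → F) → V → ℝ := fun v f => if eval (pt v) f.1 = lst v then 1 else 0 with hχ
  set e : V → ℝ := fun f => ((P.filter fun v => eval (pt v) f.1 = lst v).card : ℝ) with he
  have heχ : ∀ f : V, e f = ∑ v ∈ P, χ v f := by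
    intro f
    simp only [he, hχ, Finset.card_filter, Nat.cast_sum]
    push_cast
    rfl
  have hχsum : ∀ v : Fin (m+1) → F, ∑ f : V, χ v f = Q ^ (n - 1) := by
    intro v
    rw [← hc1 v]
    simp [hχ, Finset.sum_boole]
  have hχχ : ∀ v w : Fin (m+1) → F, v ≠ w → ∑ f : V, χ v f * χ w f ≤ Q ^ n / Q ^ 2 := by
    intro v w hvw
    refine le_trans (le_of_eq ?_) (hc2 v w hvw)
    simp only [hχ, ite_mul, one_mul, zero_mul, ← ite_and]
    simp [Finset.sum_boole]
  -- first moment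
  have hEsum : ∑ f : V, e f = p * Q ^ (n - 1) := by
    calc ∑ f : V, e f = ∑ f : V, ∑ v ∈ P, χ v f := Finset.sum_congr rfl fun f _ => heχ f
      _ = ∑ v ∈ P, ∑ f : V, χ v f := Finset.sum_comm
      _ = ∑ v ∈ P, Q ^ (n - 1) := Finset.sum_congr rfl fun v _ => hχsum v
      _ = p * Q ^ (n - 1) := by rw [Finset.sum_const, nsmul_eq_mul]
  -- second moment
  have hE2 : ∑ f : V, (e f) ^ 2 ≤ p * Q ^ (n - 1) + p * ((p : ℝ) - 1) * (Q ^ n / Q ^ 2) := by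
    have step1 : ∑ f : V, (e f) ^ 2 = ∑ v ∈ P, ∑ w ∈ P, ∑ f : V, χ v f * χ w f := by
      calc ∑ f : V, (e f) ^ 2 = ∑ f : V, ∑ v ∈ P, ∑ w ∈ P, χ v f * χ w f := by
            refine Finset.sum_congr rfl fun f _ => ?_
            rw [heχ f, sq, Finset.sum_mul_sum]
        _ = ∑ v ∈ P, ∑ f : V, ∑ w ∈ P, χ v f * χ w f := Finset.sum_comm
        _ = ∑ v ∈ P, ∑ w ∈ P, ∑ f : V, χ v f * χ w f :=
            Finset.sum_congr rfl fun v _ => Finset.sum_comm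
    rw [step1]
    have hbound : ∀ v ∈ P, ∑ w ∈ P, ∑ f : V, χ v f * χ w f
        ≤ Q ^ (n - 1) + ((p : ℝ) - 1) * (Q ^ n / Q ^ 2) := by
      intro v hv
      rw [← Finset.add_sum_erase P _ hv]
      have hdiag : ∑ f : V, χ v f * χ v f = Q ^ (n - 1) := by
        rw [← hχsum v]
        refine Finset.sum_congr rfl fun f _ => ?_
        simp only [hχ]
        by_cases h : eval (pt v) f.1 = lst v <;> simp [h]
      rw [hdiag]
      have herase : ∑ w ∈ P.erase v, ∑ f : V, χ v f * χ w f
          ≤ ((p : ℝ) - 1) * (Q ^ n / Q ^ 2) := by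
        have hp1 : ((P.erase v).card : ℝ) = (p : ℝ) - 1 := by
          rw [Finset.card_erase_of_mem hv]
          show ((p - 1 : ℕ) : ℝ) = (p : ℝ) - 1
          have : 1 ≤ p := Finset.card_pos.mpr ⟨v, hv⟩
          push_cast [this]
          ring
        calc ∑ w ∈ P.erase v, ∑ f : V, χ v f * χ w f
            ≤ ∑ w ∈ P.erase v, Q ^ n / Q ^ 2 := by
              refine Finset.sum_le_sum fun w hw => ?_
              exact hχχ v w fun h => (Finset.mem_erase.mp hw).1 h.symm
          _ = ((p : ℝ) - 1) * (Q ^ n / Q ^ 2) := by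
              rw [Finset.sum_const, nsmul_eq_mul, hp1]
      linarith
    calc ∑ v ∈ P, ∑ w ∈ P, ∑ f : V, χ v f * χ w f
        ≤ ∑ v ∈ P, (Q ^ (n - 1) + ((p : ℝ) - 1) * (Q ^ n / Q ^ 2)) :=
          Finset.sum_le_sum hbound
      _ = p * Q ^ (n - 1) + p * ((p : ℝ) - 1) * (Q ^ n / Q ^ 2) := by
          rw [Finset.sum_const, nsmul_eq_mul]
          ring
  -- variance bound
  have hcardV : ((Fintype.card V : ℕ) : ℝ) = Q ^ n := by
    rw [Module.card_eq_pow_finrank (K := F) (V := V)]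
    push_cast
    rfl
  have hQpow : Q ^ (n - 1) * Q = Q ^ n := by
    rw [← pow_succ]
    congr 1
    omega
  have hvar : ∑ f : V, (e f - p / Q) ^ 2 ≤ p * Q ^ (n - 1) := by
    have expand : ∑ f : V, (e f - p / Q) ^ 2
        = ∑ f : V, (e f) ^ 2 - 2 * ((p : ℝ) / Q) * (∑ f : V, e f)
          + (Fintype.card V : ℝ) * ((p : ℝ) / Q) ^ 2 := by
      simp_rw [sub_sq]
      rw [Finset.sum_add_distrib, Finset.sum_sub_distrib, Finset.sum_const, nsmul_eq_mul,
        Finset.card_univ]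
      have hmid : ∑ x : V, 2 * e x * ((p : ℝ) / Q) = 2 * ((p : ℝ) / Q) * ∑ x : V, e x := by
        rw [Finset.mul_sum]
        exact Finset.sum_congr rfl fun x _ => by ring
      rw [hmid]
    rw [expand, hEsum, hcardV]
    have key : ∑ f : V, (e f) ^ 2 - 2 * ((p : ℝ) / Q) * ((p : ℝ) * Q ^ (n - 1))
        + Q ^ n * ((p : ℝ) / Q) ^ 2 = ∑ f : V, (e f) ^ 2 - (p : ℝ) ^ 2 * Q ^ (n - 1) / Q := by
      rw [← hQpow]
      field_simp
      ring
    rw [key]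
    have hfinal : (p : ℝ) * Q ^ (n - 1) + p * ((p : ℝ) - 1) * (Q ^ n / Q ^ 2)
        - (p : ℝ) ^ 2 * Q ^ (n - 1) / Q ≤ p * Q ^ (n - 1) := by
      have hR2 : Q ^ n / Q ^ 2 = Q ^ (n - 1) / Q := by
        rw [← hQpow]
        field_simp
      rw [hR2]
      have hpos : 0 ≤ (p : ℝ) * Q ^ (n - 1) / Q := div_nonneg (mul_nonneg (Nat.cast_nonneg p) (pow_nonneg hQ.le _)) hQ.le
      have : (p : ℝ) * ((p : ℝ) - 1) * (Q ^ (n - 1) / Q) - (p : ℝ) ^ 2 * Q ^ (n - 1) / Q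
          = -((p : ℝ) * Q ^ (n - 1) / Q) := by ring
      linarith [this]
    linarith
  -- Cauchy–Schwarz over L
  have hval : ∀ a b : {x // x ∈ L}, (⟨a.1, hL a.1 a.2⟩ : V) = ⟨b.1, hL b.1 b.2⟩ → a = b := by
    intro a b h
    have hab : (a.1 : MvPolynomial (Fin m) F) = b.1 := by
      simpa using h
    exact Subtype.ext hab
  set emb : {x // x ∈ L} ↪ V := ⟨fun x => ⟨x.1, hL x.1 x.2⟩, hval⟩ with hemb
  set L' : Finset V := L.attach.map emb with hL'def
  have hL'card : L'.card = l := by simp [hL'def]; rfl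
  have hsum1 : ∀ g : V → ℝ, ∑ f ∈ L', g f = ∑ f ∈ L.attach, g ⟨f.1, hL f.1 f.2⟩ := by
    intro g
    rw [hL'def, Finset.sum_map]
    rfl
  have hA : ((∑ v ∈ P, (L.filter fun f =>
        MvPolynomial.eval (fun j : Fin m => v j.castSucc) f = v (Fin.last m)).card : ℕ) : ℝ)
        - (p : ℝ) * (l : ℝ) / Q = ∑ f ∈ L', (e f - (p : ℝ) / Q) := by
    have hScount : (∑ v ∈ P, (L.filter fun f =>
        MvPolynomial.eval (fun j : Fin m => v j.castSucc) f = v (Fin.last m)).card)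
        = ∑ f ∈ L, (P.filter fun v => eval (pt v) f = lst v).card := by
      simp_rw [Finset.card_filter]
      rw [Finset.sum_comm]
    rw [Finset.sum_sub_distrib, Finset.sum_const, hL'card, hsum1, hScount]
    rw [← Finset.sum_attach L (fun f => ((P.filter fun v => eval (pt v) f = lst v).card : ℕ))]
    push_cast
    rw [nsmul_eq_mul]
    have : ∑ f ∈ L.attach, e ⟨f.1, hL f.1 f.2⟩
        = ∑ f ∈ L.attach, ((P.filter fun v => eval (pt v) f.1 = lst v).card : ℝ) := rfl
    rw [this]
    push_cast
    ring
  rw [hA]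
  have hCS : (∑ f ∈ L', (e f - (p : ℝ) / Q)) ^ 2 ≤ l * ((p : ℝ) * Q ^ (n - 1)) := by
    calc (∑ f ∈ L', (e f - (p : ℝ) / Q)) ^ 2
        ≤ L'.card * ∑ f ∈ L', (e f - (p : ℝ) / Q) ^ 2 := sq_sum_le_card_mul_sum_sq
      _ ≤ l * ∑ f : V, (e f - (p : ℝ) / Q) ^ 2 := by
          rw [hL'card]
          refine mul_le_mul_of_nonneg_left ?_ (Nat.cast_nonneg l)
          exact Finset.sum_le_sum_of_subset_of_nonneg (Finset.subset_univ L')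
            fun _ _ _ => sq_nonneg _
      _ ≤ l * ((p : ℝ) * Q ^ (n - 1)) := mul_le_mul_of_nonneg_left hvar (Nat.cast_nonneg l)
  have habs : |∑ f ∈ L', (e f - (p : ℝ) / Q)| ≤ Real.sqrt ((l : ℝ) * ((p : ℝ) * Q ^ (n - 1))) := by
    rw [← Real.sqrt_sq_eq_abs]
    exact Real.sqrt_le_sqrt hCS
  refine habs.trans (le_of_eq ?_)
  have h1 : (l : ℝ) * ((p : ℝ) * Q ^ (n - 1)) = Q ^ (n - 1) * ((p : ℝ) * (l : ℝ)) := by ring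
  rw [h1, Real.sqrt_mul (by positivity)]
  congr 1
  rw [Real.sqrt_eq_rpow, ← Real.rpow_natCast Q (n - 1), ← Real.rpow_mul hQ.le]
  congr 1
  have : ((n - 1 : ℕ) : ℝ) = (n : ℝ) - 1 := by
    push_cast [hn1]
    ring
  rw [this]
  ring
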